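/- Let a ∈ ℂ with |arg a| < π and let τ ∈ ℂ with |τ| < |a|^{1/2}. Then the series Σ_{n=1}^∞ (1/n − τ²/(n+2))·(−τ)^n·a^{−n/2} converges absolutely and its sum equals F(a, τ) := τ²/2 + (a − 1)·Log(1 + τ a^{−1/2}) − τ a^{1/2}, where a^{1/2} and Log denote the principal branches of the square root and the logarithm. -/

import Mathlib

set_option maxHeartbeats 1000000


open Complex

/-- `F(a, τ) = τ²/2 + (a − 1)·Log(1 + τ a^{−1/2}) − τ a^{1/2}`, using the principal
branches of the complex logarithm and the complex power. -/
noncomputable def Ffun (a τ : ℂ) : ℂ :=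
  τ ^ 2 / 2 + (a - 1) * Complex.log (1 + τ * a ^ (-(1 : ℂ) / 2)) - τ * a ^ ((1 : ℂ) / 2)

/-- For `|arg a| < π` and `|τ| < |a|^{1/2}`, the series
`Σ_{n=1}^∞ (1/n − τ²/(n+2))·(−τ)^n·a^{−n/2}` converges absolutely and its sum is
`F(a, τ)`. -/
theorem Ffun_series (a τ : ℂ) (ha : |Complex.arg a| < Real.pi)
    (hτ : ‖τ‖ < ‖a‖ ^ ((1 : ℝ) / 2)) :
    Summable (fun n : ℕ =>
      ‖(1 / ((n : ℂ) + 1) - τ ^ 2 / ((n : ℂ) + 3)) * (-τ) ^ (n + 1) *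
        a ^ (-((n : ℂ) + 1) / 2)‖) ∧
    ∑' n : ℕ, (1 / ((n : ℂ) + 1) - τ ^ 2 / ((n : ℂ) + 3)) * (-τ) ^ (n + 1) *
        a ^ (-((n : ℂ) + 1) / 2) = Ffun a τ := by
  have ha0 : a ≠ 0 := by
    rintro rfl
    simp [Real.zero_rpow (by norm_num : (1:ℝ)/2 ≠ 0)] at hτ
    exact absurd hτ (norm_nonneg τ).not_gt
  have haa : 0 < ‖a‖ := norm_pos_iff.mpr ha0
  set w : ℂ := a ^ (-(1 : ℂ) / 2) with hw_def
  set z : ℂ := τ * w with hz_def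
  -- |w| = |a| ^ (-1/2)
  have hw_abs : ‖w‖ = ‖a‖ ^ (-(1:ℝ)/2) := by
    rw [hw_def, Complex.norm_cpow_of_ne_zero ha0]
    simp
  have hz1 : ‖z‖ < 1 := by
    rw [hz_def, norm_mul, hw_abs]
    calc ‖τ‖ * ‖a‖ ^ (-(1:ℝ)/2)
        < ‖a‖ ^ ((1:ℝ)/2) * ‖a‖ ^ (-(1:ℝ)/2) := by
          apply mul_lt_mul_of_pos_right hτ (Real.rpow_pos_of_pos haa _)
      _ = 1 := by
          rw [← Real.rpow_add haa]; norm_num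
  -- key power identity
  have hpow : ∀ n : ℕ, a ^ (-((n : ℂ) + 1) / 2) = w ^ (n + 1) := by
    intro n
    rw [hw_def, ← Complex.cpow_nat_mul]
    congr 1
    push_cast
    ring
  have hw2 : a * w ^ 2 = 1 := by
    rw [hw_def, ← Complex.cpow_nat_mul]
    rw [show ((2:ℕ):ℂ) * (-(1:ℂ)/2) = -1 by norm_num, Complex.cpow_neg_one]
    exact mul_inv_cancel₀ ha0
  have haw : a * w = a ^ ((1:ℂ)/2) := by
    rw [hw_def]
    nth_rewrite 1 [show a = a ^ (1:ℂ) by simp]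
    rw [← Complex.cpow_add _ _ ha0]
    norm_num
  -- pointwise identity: term n = coef n * (-z)^(n+1)
  have hterm : ∀ n : ℕ, (1 / ((n : ℂ) + 1) - τ ^ 2 / ((n : ℂ) + 3)) * (-τ) ^ (n + 1) *
      a ^ (-((n : ℂ) + 1) / 2)
      = (1 / ((n : ℂ) + 1) - τ ^ 2 / ((n : ℂ) + 3)) * (-z) ^ (n + 1) := by
    intro n
    rw [hpow n, hz_def, mul_assoc, ← neg_mul, mul_pow]
  -- Summability of absolute values
  have habs : Summable (fun n : ℕ =>
      ‖(1 / ((n : ℂ) + 1) - τ ^ 2 / ((n : ℂ) + 3)) * (-τ) ^ (n + 1) *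
        a ^ (-((n : ℂ) + 1) / 2)‖) := by
    apply Summable.of_nonneg_of_le (fun n => norm_nonneg _)
      (f := fun n => ((1 + ‖τ‖ ^ 2) * ‖z‖) * ‖z‖ ^ n)
    · intro n
      rw [hterm n, norm_mul, norm_pow, norm_neg]
      have h1 : ‖1 / ((n : ℂ) + 1) - τ ^ 2 / ((n : ℂ) + 3)‖ ≤
          1 + ‖τ‖ ^ 2 := by
        refine (norm_sub_le _ _).trans ?_
        gcongr
        · rw [norm_div, norm_one]
          rw [show ((n : ℂ) + 1) = ((n + 1 : ℕ) : ℂ) by push_cast; ring, Complex.norm_natCast]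
          rw [div_le_one (by positivity)]
          exact_mod_cast Nat.le_add_left 1 n
        · rw [norm_div, norm_pow]
          rw [show ((n : ℂ) + 3) = ((n + 3 : ℕ) : ℂ) by push_cast; ring, Complex.norm_natCast]
          exact div_le_self (by positivity) (by exact_mod_cast (by omega : 1 ≤ n + 3))
      calc ‖1 / ((n : ℂ) + 1) - τ ^ 2 / ((n : ℂ) + 3)‖ * ‖z‖ ^ (n + 1)
          ≤ (1 + ‖τ‖ ^ 2) * ‖z‖ ^ (n + 1) :=
            mul_le_mul_of_nonneg_right h1 (by positivity)
        _ = ((1 + ‖τ‖ ^ 2) * ‖z‖) * ‖z‖ ^ n := by ring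
    · exact (summable_geometric_of_lt_one (norm_nonneg z) hz1).mul_left _
  refine ⟨habs, ?_⟩
  -- the log series
  have hlog : HasSum (fun m : ℕ => (-z) ^ m / m) (-Complex.log (1 + z)) := by
    have := Complex.hasSum_taylorSeries_neg_log (z := -z) (by simpa using hz1)
    simpa [sub_neg_eq_add] using this
  have hg : HasSum (fun n : ℕ => (-z) ^ (n + 1) / ((n : ℂ) + 1)) (-Complex.log (1 + z)) := by
    have h0 : -Complex.log (1 + z) = -Complex.log (1 + z) -
        ∑ i ∈ Finset.range 1, (-z) ^ i / (i : ℂ) := by simp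
    rw [h0]
    have := (hasSum_nat_add_iff' (f := fun m : ℕ => (-z) ^ m / m) 1).mpr hlog
    convert this using 2 with n
    · rfl
    push_cast
    ring_nf
  have hh0 : HasSum (fun n : ℕ => (-z) ^ (n + 3) / ((n : ℂ) + 3))
      (-Complex.log (1 + z) + z - z ^ 2 / 2) := by
    have hsum3 : ∑ i ∈ Finset.range 3, (-z) ^ i / (i : ℂ) = -z + z ^ 2 / 2 := by
      rw [Finset.sum_range_succ, Finset.sum_range_succ, Finset.sum_range_one]
      norm_num
    have h0 : -Complex.log (1 + z) + z - z ^ 2 / 2 = -Complex.log (1 + z) -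
        ∑ i ∈ Finset.range 3, (-z) ^ i / (i : ℂ) := by
      rw [hsum3]; ring
    rw [h0]
    have := (hasSum_nat_add_iff' (f := fun m : ℕ => (-z) ^ m / m) 3).mpr hlog
    convert this using 2 with n
    · rfl
    push_cast
    ring_nf
  have hh : HasSum (fun n : ℕ => a * ((-z) ^ (n + 3) / ((n : ℂ) + 3)))
      (a * (-Complex.log (1 + z) + z - z ^ 2 / 2)) := hh0.mul_left a
  have hf : HasSum (fun n : ℕ => (1 / ((n : ℂ) + 1) - τ ^ 2 / ((n : ℂ) + 3)) * (-τ) ^ (n + 1) *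
      a ^ (-((n : ℂ) + 1) / 2))
      (-Complex.log (1 + z) - a * (-Complex.log (1 + z) + z - z ^ 2 / 2)) := by
    have := hg.sub hh
    convert this using 2 with n
    · rfl
    rw [hterm n]
    have hn1 : ((n : ℂ) + 1) ≠ 0 := by
      have h : ((n : ℂ) + 1) = ((n + 1 : ℕ) : ℂ) := by push_cast; ring
      rw [h]
      exact_mod_cast (by omega : (n + 1 : ℕ) ≠ 0)
    have hn3 : ((n : ℂ) + 3) ≠ 0 := by
      have h : ((n : ℂ) + 3) = ((n + 3 : ℕ) : ℂ) := by push_cast; ring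
      rw [h]
      exact_mod_cast (by omega : (n + 3 : ℕ) ≠ 0)
    have key : a * (-z) ^ (n + 3) = τ ^ 2 * (-z) ^ (n + 1) := by
      have : (-z) ^ (n + 3) = (-z) ^ (n + 1) * z ^ 2 := by ring
      rw [this, hz_def]
      have : a * ((-(τ * w)) ^ (n + 1) * (τ * w) ^ 2) =
          (a * w ^ 2) * τ ^ 2 * (-(τ * w)) ^ (n + 1) := by ring
      rw [this, hw2, one_mul]
    rw [show a * ((-z) ^ (n + 3) / ((n : ℂ) + 3)) = τ ^ 2 * (-z) ^ (n + 1) / ((n : ℂ) + 3) by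
      rw [← mul_div_assoc, key]]
    field_simp
  rw [hf.tsum_eq, Ffun]
  rw [show (1 : ℂ) + τ * a ^ (-(1 : ℂ) / 2) = 1 + z from by rw [hz_def, hw_def]]
  have haz : a * z = τ * a ^ ((1:ℂ)/2) := by
    rw [hz_def, ← mul_assoc, mul_comm a τ, mul_assoc, haw]
  have haz2 : a * z ^ 2 = τ ^ 2 := by
    rw [hz_def, mul_pow, ← mul_assoc, mul_comm a (τ^2), mul_assoc, hw2, mul_one]
  linear_combination (- 1 : ℂ) * haz + (1/2 : ℂ) * haz2
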